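/- The Whitney map ψ(x₀,…,x_n) = (r/(1+x₀²))·(x₁,…,x_n, x₀x₁,…,x₀x_n) on Sⁿ is a Lagrangian immersion into ℂⁿ: at every point of Sⁿ its differential has rank n and ψ*ω = 0, where ω is the standard symplectic form on ℝ^{2n} ≅ ℂⁿ. -/

import Mathlib

open BigOperators

/-- The Whitney sphere map (with center 0 and radius r),
ψ(x₀,…,x_n) = (r/(1+x₀²))·(x₁,…,x_n, x₀x₁,…,x₀x_n) ∈ ℝⁿ × ℝⁿ ≅ ℂⁿ. -/
noncomputable def whitneyMap (n : ℕ) (r : ℝ) (x : Fin (n + 1) → ℝ) :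
    (Fin n → ℝ) × (Fin n → ℝ) :=
  (fun i => r / (1 + (x 0) ^ 2) * x i.succ,
   fun i => r / (1 + (x 0) ^ 2) * (x 0 * x i.succ))

/-- The standard symplectic form ω = Σ du_i ∧ dv_i on ℝⁿ × ℝⁿ ≅ ℂⁿ. -/
def stdSymp (n : ℕ) (a b : (Fin n → ℝ) × (Fin n → ℝ)) : ℝ :=
  ∑ i, (a.1 i * b.2 i - a.2 i * b.1 i)

open ContinuousLinearMap in
lemma whitney_fderiv_apply (n : ℕ) (r : ℝ) (x v : Fin (n + 1) → ℝ) :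
    fderiv ℝ (whitneyMap n r) x v =
      (fun i => -(2 * r * x 0) / (1 + x 0 ^ 2) ^ 2 * v 0 * x i.succ
          + r / (1 + x 0 ^ 2) * v i.succ,
       fun i => -(2 * r * x 0) / (1 + x 0 ^ 2) ^ 2 * v 0 * (x 0 * x i.succ)
          + r / (1 + x 0 ^ 2) * (v 0 * x i.succ + x 0 * v i.succ)) := by
  have hne : (1 : ℝ) + x 0 ^ 2 ≠ 0 := by positivity
  have hφ := (hasDerivAt_const (x 0) r).div
      (((hasDerivAt_id' (x 0)).pow 2).const_add 1) hne
  have h0 : HasFDerivAt (fun y : Fin (n + 1) → ℝ => y 0)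
      (proj 0 : (Fin (n + 1) → ℝ) →L[ℝ] ℝ) x :=
    hasFDerivAt_apply (𝕜 := ℝ) 0 x
  have hq := hφ.comp_hasFDerivAt x h0
  have h1 : ∀ i : Fin n, HasFDerivAt
      (fun y : Fin (n + 1) → ℝ => r / (1 + y 0 ^ 2) * y i.succ) _ x :=
    fun i => hq.mul (hasFDerivAt_apply (𝕜 := ℝ) i.succ x)
  have h2 : ∀ i : Fin n, HasFDerivAt
      (fun y : Fin (n + 1) → ℝ => r / (1 + y 0 ^ 2) * (y 0 * y i.succ)) _ x :=
    fun i => hq.mul ((hasFDerivAt_apply (𝕜 := ℝ) 0 x).mul (hasFDerivAt_apply (𝕜 := ℝ) i.succ x))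
  have H : HasFDerivAt (whitneyMap n r) _ x :=
    HasFDerivAt.prodMk (hasFDerivAt_pi.2 h1) (hasFDerivAt_pi.2 h2)
  rw [H.fderiv]
  ext i <;>
    simp [Function.comp, smul_eq_mul] <;>
    · field_simp
      ring

/-- The Whitney map is a Lagrangian immersion of Sⁿ into ℂⁿ: at each point of the
unit sphere its differential is injective on the tangent space (rank n), and the
pullback of the standard symplectic form vanishes on the tangent space. -/
theorem whitney_lagrangian_immersion {n : ℕ} (hn : 1 ≤ n) (r : ℝ) (hr : 0 < r)
    (x : Fin (n + 1) → ℝ) (hx : ∑ i, (x i) ^ 2 = 1) :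
    (∀ v : Fin (n + 1) → ℝ, (∑ i, x i * v i = 0) →
        fderiv ℝ (whitneyMap n r) x v = 0 → v = 0) ∧
      ∀ v w : Fin (n + 1) → ℝ, (∑ i, x i * v i = 0) → (∑ i, x i * w i = 0) →
        stdSymp n (fderiv ℝ (whitneyMap n r) x v) (fderiv ℝ (whitneyMap n r) x w) = 0 := by
  have hne : (1 : ℝ) + x 0 ^ 2 ≠ 0 := by positivity
  set A : ℝ := -(2 * r * x 0) / (1 + x 0 ^ 2) ^ 2 with hA
  set C : ℝ := r / (1 + x 0 ^ 2) with hC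
  have hCne : C ≠ 0 := div_ne_zero hr.ne' hne
  constructor
  · intro v hv hD
    rw [whitney_fderiv_apply] at hD
    have e1 : ∀ i : Fin n, A * v 0 * x i.succ + C * v i.succ = 0 := by
      intro i
      have := congrFun (congrArg Prod.fst hD) i
      simpa using this
    have e2 : ∀ i : Fin n,
        A * v 0 * (x 0 * x i.succ) + C * (v 0 * x i.succ + x 0 * v i.succ) = 0 := by
      intro i
      have := congrFun (congrArg Prod.snd hD) i
      simpa using this
    have key : ∀ i : Fin n, v 0 * x i.succ = 0 := by
      intro i
      have h : C * (v 0 * x i.succ) = 0 := by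
        linear_combination e2 i - x 0 * e1 i
      exact (mul_eq_zero.mp h).resolve_left hCne
    have vsucc : ∀ i : Fin n, v i.succ = 0 := by
      intro i
      have h : C * v i.succ = 0 := by
        linear_combination e1 i - A * key i
      exact (mul_eq_zero.mp h).resolve_left hCne
    have hv0 : v 0 = 0 := by
      by_contra h0v
      have hxs : ∀ i : Fin n, x i.succ = 0 := fun i =>
        (mul_eq_zero.mp (key i)).resolve_left h0v
      have hx0 : x 0 ^ 2 = 1 := by
        rw [Fin.sum_univ_succ] at hx
        have : ∑ i : Fin n, x i.succ ^ 2 = 0 :=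
          Finset.sum_eq_zero fun i _ => by rw [hxs i]; ring
        linarith
      have hx0ne : x 0 ≠ 0 := by
        intro h; rw [h] at hx0; norm_num at hx0
      rw [Fin.sum_univ_succ] at hv
      have : ∑ i : Fin n, x i.succ * v i.succ = 0 :=
        Finset.sum_eq_zero fun i _ => by rw [hxs i]; ring
      have : x 0 * v 0 = 0 := by linarith
      exact h0v ((mul_eq_zero.mp this).resolve_left hx0ne)
    funext i
    refine Fin.cases ?_ ?_ i
    · exact hv0
    · exact fun j => vsucc j
  · intro v w hv hw
    rw [whitney_fderiv_apply, whitney_fderiv_apply]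
    have hv' : ∑ i : Fin n, x i.succ * v i.succ = -(x 0 * v 0) := by
      rw [Fin.sum_univ_succ] at hv; linarith
    have hw' : ∑ i : Fin n, x i.succ * w i.succ = -(x 0 * w 0) := by
      rw [Fin.sum_univ_succ] at hw; linarith
    unfold stdSymp
    have : ∀ i : Fin n,
        ((A * v 0 * x i.succ + C * v i.succ)
            * (A * w 0 * (x 0 * x i.succ) + C * (w 0 * x i.succ + x 0 * w i.succ))
          - (A * v 0 * (x 0 * x i.succ) + C * (v 0 * x i.succ + x 0 * v i.succ))
            * (A * w 0 * x i.succ + C * w i.succ))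
        = (C ^ 2 * w 0) * (x i.succ * v i.succ)
          - (C ^ 2 * v 0) * (x i.succ * w i.succ) := by
      intro i; ring
    calc (∑ i : Fin n,
          ((A * v 0 * x i.succ + C * v i.succ)
              * (A * w 0 * (x 0 * x i.succ) + C * (w 0 * x i.succ + x 0 * w i.succ))
            - (A * v 0 * (x 0 * x i.succ) + C * (v 0 * x i.succ + x 0 * v i.succ))
              * (A * w 0 * x i.succ + C * w i.succ)))
        = ∑ i : Fin n, ((C ^ 2 * w 0) * (x i.succ * v i.succ)
            - (C ^ 2 * v 0) * (x i.succ * w i.succ)) :=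
          Finset.sum_congr rfl fun i _ => this i
      _ = (C ^ 2 * w 0) * (∑ i : Fin n, x i.succ * v i.succ)
            - (C ^ 2 * v 0) * (∑ i : Fin n, x i.succ * w i.succ) := by
          rw [Finset.sum_sub_distrib, Finset.mul_sum, Finset.mul_sum]
      _ = 0 := by rw [hv', hw']; ring
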